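/- Let θ₀ ∈ L²(0,1), τ > 0, and y_i := √2 (-π²)^i ∑_{n≥0} c_n e^{-n²π²τ} n^{2i}. Then for every x ∈ ℂ, θ_τ(x) := ∑_{n≥0} c_n e^{-n²π²τ} √2 cos(nπx) equals ∑_{i≥0} y_i x^{2i}/(2i)!, with both series converging absolutely. -/

import Mathlib

open Real in
lemma aux_geo_summable (a b : ℝ) (ha : 0 < a) (k : ℕ) :
    Summable (fun n : ℕ => (n : ℝ) ^ k * Real.exp (-(n : ℝ) ^ 2 * a + (n : ℝ) * b)) := by
  have hr : ‖Real.exp (-a)‖ < 1 := by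
    rw [Real.norm_eq_abs, abs_of_pos (Real.exp_pos _)]
    exact Real.exp_lt_one_iff.mpr (neg_neg_of_pos ha)
  have hs : Summable (fun n : ℕ => Real.exp ((b + a) ^ 2 / (4 * a)) *
      ((n : ℝ) ^ k * Real.exp (-a) ^ n)) :=
    (summable_pow_mul_geometric_of_norm_lt_one k hr).mul_left _
  refine hs.of_nonneg_of_le (fun n => by positivity) (fun n => ?_)
  have key : (b + a) ^ 2 / (4 * a) * (4 * a) = (b + a) ^ 2 :=
    div_mul_cancel₀ _ (by positivity)
  have h1 : -(n : ℝ) ^ 2 * a + (n : ℝ) * b ≤ (b + a) ^ 2 / (4 * a) + (n : ℝ) * (-a) := by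
    nlinarith [sq_nonneg ((b + a) - 2 * a * (n : ℝ)), key, sq_nonneg ((n : ℝ))]
  calc (n : ℝ) ^ k * Real.exp (-(n : ℝ) ^ 2 * a + (n : ℝ) * b)
      ≤ (n : ℝ) ^ k * Real.exp ((b + a) ^ 2 / (4 * a) + (n:ℝ) * (-a)) := by
        exact mul_le_mul_of_nonneg_left (Real.exp_le_exp.mpr h1) (by positivity)
    _ = Real.exp ((b + a) ^ 2 / (4 * a)) * ((n : ℝ) ^ k * Real.exp (-a) ^ n) := by
        rw [Real.exp_add, Real.exp_nat_mul]; ring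

lemma aux_cosh_le_exp {z : ℝ} (hz : 0 ≤ z) : Real.cosh z ≤ Real.exp z := by
  rw [Real.cosh_eq]
  have : Real.exp (-z) ≤ Real.exp z := Real.exp_le_exp.mpr (by linarith)
  linarith

set_option maxHeartbeats 1000000 in
theorem fourier_to_taylor_exchange (c : ℕ → ℝ) (hc : Summable fun n => (c n) ^ 2)
    (τ : ℝ) (hτ : 0 < τ) (y : ℕ → ℝ)
    (hy : ∀ i : ℕ, y i = Real.sqrt 2 * (-Real.pi ^ 2) ^ i *
      ∑' n : ℕ, c n * Real.exp (-(n : ℝ) ^ 2 * Real.pi ^ 2 * τ) * (n : ℝ) ^ (2 * i))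
    (x : ℂ) :
    Summable (fun n : ℕ =>
      ‖(c n : ℂ) * Complex.exp (-(n : ℂ) ^ 2 * (Real.pi : ℂ) ^ 2 * (τ : ℂ)) *
        (Real.sqrt 2 : ℂ) * Complex.cos (n * Real.pi * x)‖) ∧
    Summable (fun i : ℕ => ‖(y i : ℂ) * x ^ (2 * i) / ((2 * i).factorial : ℂ)‖) ∧
    (∑' n : ℕ, (c n : ℂ) * Complex.exp (-(n : ℂ) ^ 2 * (Real.pi : ℂ) ^ 2 * (τ : ℂ)) *
        (Real.sqrt 2 : ℂ) * Complex.cos (n * Real.pi * x))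
      = ∑' i : ℕ, (y i : ℂ) * x ^ (2 * i) / ((2 * i).factorial : ℂ) := by
  set π := Real.pi with hπ
  have hπpos := Real.pi_pos
  -- bound on c
  set C : ℝ := Real.sqrt (∑' n, (c n) ^ 2) with hCdef
  have hC : ∀ n, |c n| ≤ C := by
    intro n
    have h1 : (c n) ^ 2 ≤ ∑' m, (c m) ^ 2 := Summable.le_tsum hc n (fun m _ => sq_nonneg _)
    have := Real.sqrt_le_sqrt h1
    rwa [Real.sqrt_sq_eq_abs] at this
  have hCnn : 0 ≤ C := Real.sqrt_nonneg _
  -- the double array of absolute values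
  set F : ℕ → ℕ → ℝ := fun n i =>
    |c n| * Real.exp (-(n : ℝ) ^ 2 * π ^ 2 * τ) * Real.sqrt 2 *
      (((n : ℝ) * π * ‖x‖) ^ (2 * i) / ((2 * i).factorial : ℝ)) with hFdef
  have hFnn : ∀ n i, 0 ≤ F n i := fun n i => by positivity
  -- fiber sums
  have hfib : ∀ n : ℕ, HasSum (fun i => F n i)
      ((|c n| * Real.exp (-(n : ℝ) ^ 2 * π ^ 2 * τ) * Real.sqrt 2) *
        Real.cosh ((n : ℝ) * π * ‖x‖)) := by
    intro n
    exact (Real.hasSum_cosh ((n : ℝ) * π * ‖x‖)).mul_left _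
  have hrowsum : Summable (fun n : ℕ => ∑' i, F n i) := by
    have hbig : Summable (fun n : ℕ => (C * Real.sqrt 2) *
        ((n : ℝ) ^ 0 * Real.exp (-(n : ℝ) ^ 2 * (π ^ 2 * τ) + (n : ℝ) * (π * ‖x‖)))) :=
      (aux_geo_summable (π ^ 2 * τ) (π * ‖x‖) (by positivity) 0).mul_left _
    refine hbig.of_nonneg_of_le (fun n => tsum_nonneg (fun i => hFnn n i)) (fun n => ?_)
    rw [(hfib n).tsum_eq]
    have h1 : Real.cosh ((n : ℝ) * π * ‖x‖) ≤ Real.exp ((n : ℝ) * (π * ‖x‖)) := by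
      rw [← mul_assoc]
      exact aux_cosh_le_exp (by positivity)
    calc |c n| * Real.exp (-(n : ℝ) ^ 2 * π ^ 2 * τ) * Real.sqrt 2 *
          Real.cosh ((n : ℝ) * π * ‖x‖)
        ≤ C * Real.exp (-(n : ℝ) ^ 2 * π ^ 2 * τ) * Real.sqrt 2 *
          Real.exp ((n : ℝ) * (π * ‖x‖)) := by
          have h2 : 0 < Real.exp (-(n : ℝ) ^ 2 * π ^ 2 * τ) := Real.exp_pos _
          have h3 : (0:ℝ) ≤ Real.sqrt 2 := Real.sqrt_nonneg _
          have h4 : 0 ≤ Real.cosh ((n : ℝ) * π * ‖x‖) := (Real.cosh_pos _).le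
          gcongr
          exact hC n
      _ = (C * Real.sqrt 2) *
          ((n : ℝ) ^ 0 * Real.exp (-(n : ℝ) ^ 2 * (π ^ 2 * τ) + (n : ℝ) * (π * ‖x‖))) := by
          rw [pow_zero, Real.exp_add]; ring_nf
  have hFsum : Summable (fun p : ℕ × ℕ => F p.1 p.2) := by
    rw [summable_prod_of_nonneg (fun p => hFnn p.1 p.2)]
    exact ⟨fun n => (hfib n).summable, hrowsum⟩
  -- the complex double array
  set f : ℕ → ℕ → ℂ := fun n i =>
    (c n : ℂ) * Complex.exp (-(n : ℂ) ^ 2 * (π : ℂ) ^ 2 * (τ : ℂ)) * (Real.sqrt 2 : ℂ) *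
      ((-1) ^ i * ((n : ℂ) * (π : ℂ) * x) ^ (2 * i) / ((2 * i).factorial : ℂ)) with hfdef
  have hexp : ∀ n : ℕ, Complex.exp (-(n : ℂ) ^ 2 * (π : ℂ) ^ 2 * (τ : ℂ)) =
      ((Real.exp (-(n : ℝ) ^ 2 * π ^ 2 * τ) : ℝ) : ℂ) := by
    intro n
    have harg : (-(n : ℂ) ^ 2 * (π : ℂ) ^ 2 * (τ : ℂ)) = ((-(n : ℝ) ^ 2 * π ^ 2 * τ : ℝ) : ℂ) := by
      push_cast; ring
    rw [harg, ← Complex.ofReal_exp]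
  have hnorm : ∀ n i, ‖f n i‖ = F n i := by
    intro n i
    simp only [hfdef, hFdef, hexp n, norm_mul, norm_div, norm_pow, norm_neg, norm_one,
      one_pow, one_mul, Complex.norm_real, Complex.norm_natCast, Real.norm_eq_abs,
      abs_of_pos (Real.exp_pos _), abs_of_pos (show (0:ℝ) < π from hπpos),
      abs_of_nonneg (Real.sqrt_nonneg (2:ℝ))]
  have hfsum : Summable (Function.uncurry f) := by
    refine Summable.of_norm ?_
    simpa only [Function.uncurry, hnorm] using hFsum
  -- row identity : each Fourier term is a power series in x
  have hrow : ∀ n : ℕ,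
      (c n : ℂ) * Complex.exp (-(n : ℂ) ^ 2 * (π : ℂ) ^ 2 * (τ : ℂ)) * (Real.sqrt 2 : ℂ) *
        Complex.cos ((n : ℂ) * (π : ℂ) * x) = ∑' i, f n i := by
    intro n
    rw [Complex.cos_eq_tsum ((n : ℂ) * (π : ℂ) * x), ← tsum_mul_left]
  -- column identity
  have hcol : ∀ i : ℕ, (∑' n, f n i) = (y i : ℂ) * x ^ (2 * i) / ((2 * i).factorial : ℂ) := by
    intro i
    have hpt : ∀ n : ℕ, f n i =
        ((c n * Real.exp (-(n : ℝ) ^ 2 * π ^ 2 * τ) * (n : ℝ) ^ (2 * i) : ℝ) : ℂ) *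
          ((Real.sqrt 2 : ℂ) * (((-π ^ 2 : ℝ) ^ i : ℝ) : ℂ) * x ^ (2 * i) /
            ((2 * i).factorial : ℂ)) := by
      intro n
      simp only [hfdef, hexp n]
      push_cast
      ring
    calc (∑' n, f n i)
        = (∑' n, ((c n * Real.exp (-(n : ℝ) ^ 2 * π ^ 2 * τ) * (n : ℝ) ^ (2 * i) : ℝ) : ℂ)) *
          ((Real.sqrt 2 : ℂ) * (((-π ^ 2 : ℝ) ^ i : ℝ) : ℂ) * x ^ (2 * i) /
            ((2 * i).factorial : ℂ)) := by
          rw [← tsum_mul_right]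
          exact tsum_congr hpt
      _ = (y i : ℂ) * x ^ (2 * i) / ((2 * i).factorial : ℂ) := by
          rw [← Complex.ofReal_tsum, hy i]
          push_cast
          ring
  -- part 1
  have hpart1 : Summable (fun n : ℕ =>
      ‖(c n : ℂ) * Complex.exp (-(n : ℂ) ^ 2 * (π : ℂ) ^ 2 * (τ : ℂ)) *
        (Real.sqrt 2 : ℂ) * Complex.cos ((n : ℂ) * (π : ℂ) * x)‖) := by
    refine hrowsum.of_nonneg_of_le (fun n => norm_nonneg _) (fun n => ?_)
    rw [hrow n]
    have h1 : Summable fun i => ‖f n i‖ := by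
      simpa only [hnorm] using (hfib n).summable
    calc ‖∑' i, f n i‖ ≤ ∑' i, ‖f n i‖ := norm_tsum_le_tsum_norm h1
      _ = ∑' i, F n i := tsum_congr (fun i => hnorm n i)
  -- summability facts for columns
  have hFswap : Summable (fun p : ℕ × ℕ => F p.2 p.1) := hFsum.prod_symm
  have hcolsums := (summable_prod_of_nonneg (f := fun p : ℕ × ℕ => F p.2 p.1)
    (fun p => hFnn p.2 p.1)).mp hFswap
  -- part 2
  have hpart2 : Summable (fun i : ℕ =>
      ‖(y i : ℂ) * x ^ (2 * i) / ((2 * i).factorial : ℂ)‖) := by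
    refine hcolsums.2.of_nonneg_of_le (fun i => norm_nonneg _) (fun i => ?_)
    rw [← hcol i]
    have h1 : Summable fun n => ‖f n i‖ := by
      simpa only [hnorm] using hcolsums.1 i
    calc ‖∑' n, f n i‖ ≤ ∑' n, ‖f n i‖ := norm_tsum_le_tsum_norm h1
      _ = ∑' n, F n i := tsum_congr (fun n => hnorm n i)
  refine ⟨hpart1, hpart2, ?_⟩
  calc (∑' n : ℕ, (c n : ℂ) * Complex.exp (-(n : ℂ) ^ 2 * (π : ℂ) ^ 2 * (τ : ℂ)) *
          (Real.sqrt 2 : ℂ) * Complex.cos ((n : ℂ) * (π : ℂ) * x))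
      = ∑' (n : ℕ) (i : ℕ), f n i := tsum_congr hrow
    _ = ∑' (i : ℕ) (n : ℕ), f n i := (Summable.tsum_comm hfsum).symm
    _ = ∑' i : ℕ, (y i : ℂ) * x ^ (2 * i) / ((2 * i).factorial : ℂ) := tsum_congr hcol
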